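/- Let G be a finite group acting on a simplicial set X, and let H ≤ G. If a point of the geometric realization |X| is fixed by H, then it can be represented by a pair (x, t) where x is an H-fixed simplex of X; consequently the natural map |X^H| → |X|^H is surjective (and in fact a homeomorphism). -/

import Mathlib

open CategoryTheory

/-- The `H`-fixed sub-simplicial set `X^H` of a simplicial set `X` with `G`-action
`ρ : G →* Aut X`: its simplices are the levelwise `H`-fixed simplices of `X`. -/
def fixedSSet (X : SSet) {G : Type*} [Group G] (ρ : G →* Aut X)
    (H : Subgroup G) : SSet where
  obj Δ := {x : X.obj Δ // ∀ h ∈ H, (ρ h).hom.app Δ x = x}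
  map f := TypeCat.ofHom fun x => ⟨X.map f x.1, fun h hh => by
    rw [FunctorToTypes.naturality, x.2 h hh]⟩
  map_id := by
    intro Δ
    ext x
    change X.map (𝟙 Δ) x.1 = x.1
    simp
  map_comp := by
    intro _ _ _ f g
    ext x
    change X.map (f ≫ g) x.1 = X.map g (X.map f x.1)
    simp

/-- The inclusion `X^H ⟶ X` of simplicial sets. -/
def fixedInclusion (X : SSet) {G : Type*} [Group G] (ρ : G →* Aut X)
    (H : Subgroup G) : fixedSSet X ρ H ⟶ X where
  app Δ := TypeCat.ofHom fun x => x.1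
  naturality := by intros; rfl

namespace FixedAux

universe u

open CategoryTheory Opposite SimplexCategory NNReal


/-- A monotone surjective endomorphism of `Fin N` is the identity. -/
lemma strictMono_surj_eq_id {N : ℕ} (f : Fin N → Fin N) (hf : StrictMono f)
    (hs : Function.Surjective f) : ∀ i, f i = i := by
  have e : Fin N ≃o Fin N := StrictMono.orderIsoOfSurjective f hf hs
  have := Subsingleton.elim (StrictMono.orderIsoOfSurjective f hf hs) (OrderIso.refl _)
  intro i
  have h1 : (StrictMono.orderIsoOfSurjective f hf hs) i = f i := rfl
  rw [this] at h1
  exact h1.symm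

lemma surj_endo_eq_id {n : ℕ} (f : mk n ⟶ mk n) (hs : Function.Surjective f.toOrderHom) :
    f = 𝟙 (mk n) := by
  have hinj : Function.Injective f.toOrderHom :=
    Finite.injective_iff_surjective.mpr hs
  have hsm : StrictMono f.toOrderHom := f.toOrderHom.monotone.strictMono_of_injective hinj
  ext i : 3
  exact strictMono_surj_eq_id _ hsm hs i

lemma inj_endo_eq_id {n : ℕ} (f : mk n ⟶ mk n) (hs : Function.Injective f.toOrderHom) :
    f = 𝟙 (mk n) := by
  exact surj_endo_eq_id f (Finite.injective_iff_surjective.mp hs)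

/-- Epi-mono factorization with explicit `mk` objects. -/
lemma factorization {Δ : SimplexCategory} {m : ℕ} (f : Δ ⟶ mk m) :
    ∃ (c : ℕ) (e : Δ ⟶ mk c) (i : mk c ⟶ mk m),
      Function.Surjective e.toOrderHom ∧ Function.Injective i.toOrderHom ∧ e ≫ i = f := by
  classical
  set S : Finset (Fin (m + 1)) := Finset.univ.image f.toOrderHom with hS
  have hne : S.Nonempty := ⟨f.toOrderHom 0, Finset.mem_image_of_mem _ (Finset.mem_univ 0)⟩
  have hcard : S.card = (S.card - 1) + 1 := (Nat.succ_pred_eq_of_pos hne.card_pos).symm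
  set c : ℕ := S.card - 1
  have hmem : ∀ i, f.toOrderHom i ∈ S := fun i => Finset.mem_image_of_mem _ (Finset.mem_univ i)
  let E : Fin (c + 1) ≃o S := S.orderIsoOfFin hcard
  refine ⟨c, SimplexCategory.Hom.mk ⟨fun i => E.symm ⟨f.toOrderHom i, hmem i⟩, ?_⟩,
    SimplexCategory.Hom.mk ⟨fun i => (E i : Fin (m+1)), ?_⟩, ?_, ?_, ?_⟩
  · intro a b hab
    exact E.symm.monotone (by exact f.toOrderHom.monotone hab)
  · intro a b hab
    exact E.monotone hab
  · intro j
    obtain ⟨i, -, hi⟩ := Finset.mem_image.mp (E j).2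
    refine ⟨i, ?_⟩
    show E.symm ⟨f.toOrderHom i, hmem i⟩ = j
    rw [show (⟨f.toOrderHom i, hmem i⟩ : S) = E j from Subtype.ext hi, E.symm_apply_apply]
  · intro a b hab
    exact E.injective (Subtype.coe_injective hab)
  · apply SimplexCategory.Hom.ext'
    apply OrderHom.ext
    funext i
    show ((E (E.symm ⟨f.toOrderHom i, hmem i⟩)) : Fin (m+1)) = f.toOrderHom i
    rw [E.apply_symm_apply]




/-- The topological simplex with `ℝ≥0` coordinates. -/
def _root_.SimplexCategory.toTopObj (x : SimplexCategory) : Set (Fin (x.len + 1) → ℝ≥0) :=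
  {f | ∑ i, f i = 1}

instance (x : SimplexCategory) : CoeFun x.toTopObj fun _ => Fin (x.len + 1) → ℝ≥0 :=
  ⟨fun f => (f : Fin (x.len + 1) → ℝ≥0)⟩

theorem _root_.SimplexCategory.toTopObj.ext {x : SimplexCategory} (f g : x.toTopObj) :
    (f : Fin (x.len + 1) → ℝ≥0) = g → f = g :=
  Subtype.ext

/-- The induced map of topological simplices. -/
noncomputable def toTopMap {x y : SimplexCategory} (f : x ⟶ y) (g : x.toTopObj) : y.toTopObj :=
  ⟨fun i => ∑ j ∈ Finset.univ.filter (fun j => f.toOrderHom j = i), g j,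
    (Finset.sum_fiberwise Finset.univ _ _).trans g.2⟩

theorem coe_toTopMap {x y : SimplexCategory} (f : x ⟶ y) (g : x.toTopObj) (i : Fin (y.len + 1)) :
    toTopMap f g i = ∑ j ∈ Finset.univ.filter (fun j => f.toOrderHom j = i), g j :=
  rfl


/-- A point of the topological simplex is interior if all coordinates are nonzero. -/
def Interior {Δ : SimplexCategory} (s : Δ.toTopObj) : Prop :=
  ∀ i : Fin (Δ.len + 1), s i ≠ 0

lemma toTopMap_id {Δ : SimplexCategory} (s : Δ.toTopObj) :
    toTopMap (𝟙 Δ) s = s := by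
  classical
  apply SimplexCategory.toTopObj.ext
  funext i
  rw [coe_toTopMap]
  refine Eq.trans (Finset.sum_congr ?_ (fun _ _ => rfl)) (Finset.sum_singleton _ i)
  ext j
  simp only [Finset.mem_filter, Finset.mem_univ, true_and, Finset.mem_singleton]
  rfl

lemma toTopMap_comp {a b c : SimplexCategory} (f : a ⟶ b) (g : b ⟶ c) (s : a.toTopObj) :
    toTopMap (f ≫ g) s = toTopMap g (toTopMap f s) := by
  classical
  apply SimplexCategory.toTopObj.ext
  funext i
  simp only [coe_toTopMap]
  rw [← Finset.sum_fiberwise_of_maps_to (g := f.toOrderHom)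
    (t := Finset.univ.filter (fun k => g.toOrderHom k = i))]
  · refine Finset.sum_congr rfl (fun k hk => Finset.sum_congr ?_ (fun _ _ => rfl))
    ext j
    simp only [Finset.mem_filter, Finset.mem_univ, true_and] at hk ⊢
    constructor
    · rintro ⟨-, h⟩
      exact h
    · intro h
      refine ⟨?_, h⟩
      show g.toOrderHom (f.toOrderHom j) = i
      rw [h]
      exact hk
  · intro j hj
    simp only [Finset.mem_filter, Finset.mem_univ, true_and] at hj ⊢
    exact hj

/-- Old-style point to new-style point. -/
noncomputable def toNew {Δ : SimplexCategory} (s : Δ.toTopObj) : SimplexCategory.toTop.{u}.obj Δ :=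
  ULift.up ⟨fun i => (s i : ℝ), fun i => (s i).2, by
    rw [← NNReal.coe_sum]
    exact congrArg NNReal.toReal s.2⟩

/-- New-style point to old-style point. -/
noncomputable def toOld {Δ : SimplexCategory} (p : SimplexCategory.toTop.{u}.obj Δ) : Δ.toTopObj :=
  ⟨fun i => ⟨p.down.1 i, p.down.2.1 i⟩, by
    apply NNReal.eq
    have h := p.down.2.2
    exact (NNReal.coe_sum _ _).trans h⟩

lemma toOld_toNew {Δ : SimplexCategory} (s : Δ.toTopObj) : toOld.{u} (toNew.{u} s) = s := rfl

lemma toNew_toOld {Δ : SimplexCategory} (p : SimplexCategory.toTop.{u}.obj Δ) :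
    toNew (toOld p) = p := rfl

lemma toTop_map_toNew {a b : SimplexCategory} (f : a ⟶ b) (s : a.toTopObj) :
    SimplexCategory.toTop.{u}.map f (toNew s) = toNew (toTopMap f s) := by
  classical
  apply ULift.ext
  apply Subtype.ext
  funext i
  change FunOnFinite.linearMap ℝ ℝ f.toOrderHom (fun j => (s j : ℝ)) i = _
  rw [FunOnFinite.linearMap_apply_apply]
  change _ = ((∑ j ∈ Finset.univ.filter (fun j => f.toOrderHom j = i), s j : ℝ≥0) : ℝ)
  rw [NNReal.coe_sum]

lemma toOld_map {a b : SimplexCategory} (f : a ⟶ b) (p : SimplexCategory.toTop.{u}.obj a) :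
    toOld (SimplexCategory.toTop.{u}.map f p) = toTopMap f (toOld p) := by
  rw [← toNew_toOld p, toTop_map_toNew, toOld_toNew, toOld_toNew]

lemma toTopMap_apply_of_inj {a b : SimplexCategory} (f : a ⟶ b)
    (hf : Function.Injective f.toOrderHom) (s : a.toTopObj) (i : Fin (a.len + 1)) :
    toTopMap f s (f.toOrderHom i) = s i := by
  classical
  rw [coe_toTopMap]
  refine Eq.trans (Finset.sum_congr ?_ (fun _ _ => rfl)) (Finset.sum_singleton _ i)
  ext j
  simp only [Finset.mem_filter, Finset.mem_univ, true_and, Finset.mem_singleton]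
  exact ⟨fun h => hf h, fun h => by rw [h]⟩

lemma toTopMap_apply_of_not_mem {a b : SimplexCategory} (f : a ⟶ b)
    (s : a.toTopObj) (j : Fin (b.len + 1)) (hj : ∀ i, f.toOrderHom i ≠ j) :
    toTopMap f s j = 0 := by
  classical
  rw [coe_toTopMap]
  refine Eq.trans (Finset.sum_congr ?_ (fun _ _ => rfl)) Finset.sum_empty
  ext i
  simp only [Finset.mem_filter, Finset.mem_univ, true_and, Finset.notMem_empty, iff_false]
  exact hj i

lemma interior_toTopMap_of_surj {a b : SimplexCategory} (f : a ⟶ b)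
    (hf : Function.Surjective f.toOrderHom) {s : a.toTopObj} (hs : Interior s) :
    Interior (toTopMap f s) := by
  classical
  intro j h0
  obtain ⟨i, hi⟩ := hf j
  rw [coe_toTopMap] at h0
  refine hs i (Finset.sum_eq_zero_iff.mp h0 i ?_)
  simp only [Finset.mem_filter, Finset.mem_univ, true_and]
  exact hi

/-- support of `toTopMap f s` for injective `f` and interior `s`. -/
lemma support_toTopMap {a b : SimplexCategory} (f : a ⟶ b)
    (hf : Function.Injective f.toOrderHom) {s : a.toTopObj} (hs : Interior s)
    (j : Fin (b.len + 1)) :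
    toTopMap f s j ≠ 0 ↔ j ∈ Finset.univ.image f.toOrderHom := by
  classical
  simp only [Finset.mem_image, Finset.mem_univ, true_and]
  constructor
  · intro hj
    by_contra hc
    push_neg at hc
    exact hj (toTopMap_apply_of_not_mem f s j hc)
  · rintro ⟨i, rfl⟩
    rw [toTopMap_apply_of_inj f hf s i]
    exact hs i

/-- Every point of the topological simplex is the image of an interior point
under an injective map. -/
lemma face_exists {n : ℕ} (t : (mk n).toTopObj) :
    ∃ (a : ℕ) (j : mk a ⟶ mk n) (s : (mk a).toTopObj),
      Function.Injective j.toOrderHom ∧ Interior s ∧ toTopMap j s = t := by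
  classical
  have ht : ∑ i, t i = 1 := t.2
  set S : Finset (Fin (n + 1)) := Finset.univ.filter (fun i => t i ≠ 0) with hS
  have hne : S.Nonempty := by
    by_contra h
    rw [Finset.not_nonempty_iff_eq_empty] at h
    have h1 : ∑ i, t i = 0 := by
      apply Finset.sum_eq_zero
      intro i _
      by_contra hi
      exact (Finset.notMem_empty i) (h ▸ (Finset.mem_filter.mpr ⟨Finset.mem_univ i, hi⟩))
    rw [ht] at h1; exact one_ne_zero h1
  have hcard : S.card = (S.card - 1) + 1 := (Nat.succ_pred_eq_of_pos hne.card_pos).symm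
  set a : ℕ := S.card - 1
  set E := S.orderEmbOfFin hcard with hE
  have hrange : ∀ i, E i ∈ S := fun i => S.orderEmbOfFin_mem hcard i
  let jh : mk a ⟶ mk n := SimplexCategory.Hom.mk ⟨⇑E, E.monotone⟩
  refine ⟨a, jh, ⟨fun i => t (E i), ?_⟩, ?_, ?_, ?_⟩
  · show ∑ i, t (E i) = 1
    have hs1 : ∑ i, t (E i) = ∑ j ∈ S, t j := by
      refine Finset.sum_bij (fun i _ => E i) (fun i _ => hrange i)
        (fun i _ j _ h => E.injective h) ?_ (fun i _ => rfl)
      intro x hx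
      have : x ∈ Set.range ⇑E := by rw [S.range_orderEmbOfFin hcard]; exact hx
      obtain ⟨i, rfl⟩ := this
      exact ⟨i, Finset.mem_univ i, rfl⟩
    rw [hs1, hS, Finset.sum_filter_ne_zero]
    exact ht
  · exact E.injective
  · intro i
    have := Finset.mem_filter.mp (hrange i)
    exact this.2
  · apply SimplexCategory.toTopObj.ext
    funext j
    show toTopMap _ _ j = t j
    by_cases hj : j ∈ S
    · have : j ∈ Set.range ⇑E := by rw [S.range_orderEmbOfFin hcard]; exact hj
      obtain ⟨i, rfl⟩ := this
      exact toTopMap_apply_of_inj jh E.injective _ i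
    · have h0 : t j = 0 := by
        by_contra hc
        exact hj (Finset.mem_filter.mpr ⟨Finset.mem_univ j, hc⟩)
      rw [h0]
      apply toTopMap_apply_of_not_mem
      intro i hi
      exact hj (hi ▸ hrange i)


/-- Uniqueness of the face decomposition. -/
lemma face_unique {n a a' : ℕ} (j : mk a ⟶ mk n) (j' : mk a' ⟶ mk n)
    (s : (mk a).toTopObj) (s' : (mk a').toTopObj)
    (hj : Function.Injective j.toOrderHom) (hj' : Function.Injective j'.toOrderHom)
    (hs : Interior s) (hs' : Interior s') (h : toTopMap j s = toTopMap j' s') :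
    (⟨a, j, s⟩ : Σ b : ℕ, (mk b ⟶ mk n) × (mk b).toTopObj) = ⟨a', j', s'⟩ := by
  classical
  have himg : Finset.univ.image j.toOrderHom = Finset.univ.image j'.toOrderHom := by
    ext x
    rw [← support_toTopMap j hj hs x, ← support_toTopMap j' hj' hs' x, h]
  have hcard : a + 1 = a' + 1 := by
    have h1 : (Finset.univ.image j.toOrderHom).card = a + 1 := by
      rw [Finset.card_image_of_injective _ hj]; simp
    have h2 : (Finset.univ.image j'.toOrderHom).card = a' + 1 := by
      rw [Finset.card_image_of_injective _ hj']; simp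
    rw [← h1, ← h2, himg]
  obtain rfl : a = a' := by omega
  set S : Finset (Fin (n + 1)) := Finset.univ.image j.toOrderHom with hSdef
  have hScard : S.card = a + 1 := by rw [hSdef, Finset.card_image_of_injective _ hj]; simp
  have e1 : (j.toOrderHom : Fin (a+1) → Fin (n+1)) = ⇑(S.orderEmbOfFin hScard) :=
    Finset.orderEmbOfFin_unique hScard (fun i => Finset.mem_image_of_mem _ (Finset.mem_univ i))
      (j.toOrderHom.monotone.strictMono_of_injective hj)
  have e2 : (j'.toOrderHom : Fin (a+1) → Fin (n+1)) = ⇑(S.orderEmbOfFin hScard) :=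
    Finset.orderEmbOfFin_unique hScard
      (fun i => himg ▸ Finset.mem_image_of_mem _ (Finset.mem_univ i))
      (j'.toOrderHom.monotone.strictMono_of_injective hj')
  have hjj : j = j' := by
    apply SimplexCategory.Hom.ext'
    apply OrderHom.ext
    rw [e1, e2]
  subst hjj
  have hss : s = s' := by
    apply SimplexCategory.toTopObj.ext
    funext i
    rw [← toTopMap_apply_of_inj j hj s i, h, toTopMap_apply_of_inj j hj' s' i]
  rw [hss]

/-- A monotone section of a surjection through a prescribed point. -/
lemma section_exists {Δ : SimplexCategory} {m : ℕ} (σ : Δ ⟶ mk m)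
    (hσ : Function.Surjective σ.toOrderHom) (i₀ : Fin (Δ.len + 1)) :
    ∃ δ : mk m ⟶ Δ, δ ≫ σ = 𝟙 (mk m) ∧ δ.toOrderHom (σ.toOrderHom i₀) = i₀ := by
  classical
  set f := (σ.toOrderHom : Fin (Δ.len + 1) → Fin (m + 1)) with hf
  have hfib : ∀ j : Fin (m + 1), (Finset.univ.filter (fun i => f i = j)).Nonempty := by
    intro j
    obtain ⟨i, hi⟩ := hσ j
    exact ⟨i, Finset.mem_filter.mpr ⟨Finset.mem_univ i, hi⟩⟩
  let g : Fin (m + 1) → Fin (Δ.len + 1) := fun j =>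
    if j < f i₀ then (Finset.univ.filter (fun i => f i = j)).min' (hfib j)
    else if f i₀ < j then (Finset.univ.filter (fun i => f i = j)).max' (hfib j)
    else i₀
  have hmem : ∀ j, f (g j) = j := by
    intro j
    by_cases h1 : j < f i₀
    · have := Finset.min'_mem _ (hfib j)
      simp only [g, if_pos h1]
      exact (Finset.mem_filter.mp this).2
    · by_cases h2 : f i₀ < j
      · have := Finset.max'_mem _ (hfib j)
        simp only [g, if_neg h1, if_pos h2]
        exact (Finset.mem_filter.mp this).2
      · have hj : j = f i₀ := le_antisymm (not_lt.mp h2) (not_lt.mp h1)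
        simp only [g, if_neg h1, if_neg h2]
        exact hj.symm
  have horder : ∀ {u v : Fin (Δ.len + 1)} {j j' : Fin (m + 1)},
      f u = j → f v = j' → j < j' → u < v := by
    intro u v j j' hu hv hjj
    by_contra hc
    push_neg at hc
    have : f v ≤ f u := σ.toOrderHom.monotone hc
    rw [hu, hv] at this
    exact absurd hjj (not_lt.mpr this)
  have hmono : Monotone g := by
    intro j j' hjj
    rcases eq_or_lt_of_le hjj with rfl | hlt
    · exact le_refl _
    · exact le_of_lt (horder (hmem j) (hmem j') hlt)
  refine ⟨SimplexCategory.Hom.mk ⟨g, hmono⟩, ?_, ?_⟩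
  · apply SimplexCategory.Hom.ext'
    apply OrderHom.ext
    funext j
    exact hmem j
  · show g (f i₀) = i₀
    simp only [g, if_neg (lt_irrefl (f i₀))]

section SSetPart

variable (X : SSet)

/-- `x` is nondegenerate if it is not in the image of any non-trivial degeneracy. -/
def Nondeg {Δ : SimplexCategory} (x : X.obj (op Δ)) : Prop :=
  ∀ (m : ℕ) (σ : Δ ⟶ mk m) (z : X.obj (op (mk m))),
    Function.Surjective σ.toOrderHom → x = X.map σ.op z → Δ.len ≤ m

lemma surj_comp {a b c : SimplexCategory} {f : a ⟶ b} {g : b ⟶ c}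
    (hf : Function.Surjective f.toOrderHom) (hg : Function.Surjective g.toOrderHom) :
    Function.Surjective (f ≫ g).toOrderHom := by
  have : ((f ≫ g).toOrderHom : Fin (a.len+1) → Fin (c.len+1)) =
      (g.toOrderHom : Fin (b.len+1) → Fin (c.len+1)) ∘ f.toOrderHom := rfl
  rw [this]
  exact hg.comp hf

lemma map_op_comp {a b c : SimplexCategory} (f : a ⟶ b) (g : b ⟶ c)
    (z : X.obj (op c)) : X.map (f ≫ g).op z = X.map f.op (X.map g.op z) := by
  rw [op_comp, FunctorToTypes.map_comp_apply]

/-- Eilenberg-Zilber: existence of the degeneracy decomposition. -/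
lemma ez_exists : ∀ (n : ℕ) (x : X.obj (op (mk n))),
    ∃ (k : ℕ) (σ : mk n ⟶ mk k) (z : X.obj (op (mk k))),
      Function.Surjective σ.toOrderHom ∧ Nondeg X z ∧ x = X.map σ.op z := by
  intro n
  induction n using Nat.strong_induction_on with
  | _ n IH =>
    intro x
    by_cases hx : Nondeg X x
    · refine ⟨n, 𝟙 (mk n), x, Function.surjective_id, hx, ?_⟩
      rw [op_id, FunctorToTypes.map_id_apply]
    · simp only [Nondeg, not_forall] at hx
      obtain ⟨m, σ, z, hσ, hxz, hm⟩ := hx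
      have hmn : m < n := by
        simp only [SimplexCategory.len_mk, not_le] at hm
        exact hm
      obtain ⟨k, τ, w, hτ, hw, hzw⟩ := IH m hmn z
      refine ⟨k, σ ≫ τ, w, surj_comp hσ hτ, hw, ?_⟩
      rw [map_op_comp, ← hzw]
      exact hxz

lemma nondeg_inj {k k' : ℕ} (z : X.obj (op (SimplexCategory.mk k))) (hz : Nondeg X z)
    (φ : mk k ⟶ mk k') (z' : X.obj (op (mk k')))
    (h : z = X.map φ.op z') : Function.Injective φ.toOrderHom := by
  obtain ⟨c, e, i, he, hi, hei⟩ := factorization φ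
  have hz2 : z = X.map e.op (X.map i.op z') := by
    rw [← map_op_comp, hei]; exact h
  have h1 : k ≤ c := hz c e _ he hz2
  have h2 : c ≤ k := by
    have := Fintype.card_le_of_surjective _ he
    simpa using this
  obtain rfl : c = k := le_antisymm h2 h1
  have : e = 𝟙 _ := surj_endo_eq_id e he
  rw [this, Category.id_comp] at hei
  rw [← hei]
  exact hi

/-- Eilenberg-Zilber: uniqueness of the degeneracy decomposition. -/
lemma ez_unique {Δ : SimplexCategory} {k k' : ℕ} (σ : Δ ⟶ mk k) (σ' : Δ ⟶ mk k')
    (z : X.obj (op (mk k))) (z' : X.obj (op (mk k')))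
    (hσ : Function.Surjective σ.toOrderHom) (hσ' : Function.Surjective σ'.toOrderHom)
    (hz : Nondeg X z) (hz' : Nondeg X z')
    (h : X.map σ.op z = X.map σ'.op z') :
    (⟨k, σ, z⟩ : Σ b : ℕ, (Δ ⟶ mk b) × X.obj (op (mk b))) = ⟨k', σ', z'⟩ := by
  have key : ∀ (δ : mk k ⟶ Δ), δ ≫ σ = 𝟙 (mk k) →
      z = X.map (δ ≫ σ').op z' ∧ Function.Injective (δ ≫ σ').toOrderHom := by
    intro δ hδ
    have h1 : z = X.map δ.op (X.map σ.op z) := by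
      rw [← map_op_comp, hδ, op_id, FunctorToTypes.map_id_apply]
    have h2 : z = X.map (δ ≫ σ').op z' := by
      rw [map_op_comp, ← h]; exact h1
    exact ⟨h2, nondeg_inj X z hz _ z' h2⟩
  have key' : ∀ (δ' : mk k' ⟶ Δ), δ' ≫ σ' = 𝟙 (mk k') →
      z' = X.map (δ' ≫ σ).op z ∧ Function.Injective (δ' ≫ σ).toOrderHom := by
    intro δ' hδ'
    have h1 : z' = X.map δ'.op (X.map σ'.op z') := by
      rw [← map_op_comp, hδ', op_id, FunctorToTypes.map_id_apply]
    have h2 : z' = X.map (δ' ≫ σ).op z := by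
      rw [map_op_comp, h]; exact h1
    exact ⟨h2, nondeg_inj X z' hz' _ z h2⟩
  obtain ⟨δ₀, hδ₀, -⟩ := section_exists σ hσ 0
  obtain ⟨δ₀', hδ₀', -⟩ := section_exists σ' hσ' 0
  have hkk' : k ≤ k' := by
    have := Fintype.card_le_of_injective _ (key δ₀ hδ₀).2
    simpa using this
  have hk'k : k' ≤ k := by
    have := Fintype.card_le_of_injective _ (key' δ₀' hδ₀').2
    simpa using this
  obtain rfl : k' = k := le_antisymm hk'k hkk'
  have hzz' : z = z' := by
    obtain ⟨h2, hinj⟩ := key δ₀ hδ₀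
    rw [inj_endo_eq_id _ hinj, op_id, FunctorToTypes.map_id_apply] at h2
    exact h2
  have hσσ' : σ = σ' := by
    apply SimplexCategory.Hom.ext'
    apply OrderHom.ext
    funext i₀
    obtain ⟨δ, hδ, hpt⟩ := section_exists σ hσ i₀
    have hid : δ ≫ σ' = 𝟙 _ := inj_endo_eq_id _ (key δ hδ).2
    have : σ'.toOrderHom (δ.toOrderHom (σ.toOrderHom i₀)) = σ.toOrderHom i₀ := by
      have := congrArg (fun q => SimplexCategory.Hom.toOrderHom q (σ.toOrderHom i₀)) hid
      exact this
    rw [hpt] at this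
    exact this.symm
  rw [hzz', hσσ']

/-- Representatives of points of the geometric realization. -/
abbrev PtRep := Σ k : ℕ, X.obj (op (SimplexCategory.mk k)) × (SimplexCategory.mk k).toTopObj

def IsNormal (r : PtRep X) : Prop := Nondeg X r.2.1 ∧ Interior r.2.2

/-- `r` reduces to `r'` via a face followed by a degeneracy. -/
def Reduces (r r' : PtRep X) : Prop :=
  ∃ (a : ℕ) (j : mk a ⟶ mk r.1) (σ : mk a ⟶ mk r'.1) (s₀ : (mk a).toTopObj),
    Function.Injective j.toOrderHom ∧ Function.Surjective σ.toOrderHom ∧ Interior s₀ ∧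
    toTopMap j s₀ = r.2.2 ∧ X.map j.op r.2.1 = X.map σ.op r'.2.1 ∧ toTopMap σ s₀ = r'.2.2

lemma reduces_exists (r : PtRep X) : ∃ r', IsNormal X r' ∧ Reduces X r r' := by
  obtain ⟨n, x, t⟩ := r
  obtain ⟨a, j, s₀, hj, hint, hts⟩ := face_exists t
  obtain ⟨k, σ, z, hσ, hz, hxz⟩ := ez_exists X a (X.map j.op x)
  exact ⟨⟨k, z, toTopMap σ s₀⟩, ⟨hz, interior_toTopMap_of_surj σ hσ hint⟩,
    a, j, σ, s₀, hj, hσ, hint, hts, hxz, rfl⟩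

lemma reduces_unique {r r₁ r₂ : PtRep X} (h1 : Reduces X r r₁) (h2 : Reduces X r r₂)
    (hn1 : IsNormal X r₁) (hn2 : IsNormal X r₂) : r₁ = r₂ := by
  obtain ⟨n, x, t⟩ := r
  obtain ⟨k₁, z₁, s₁⟩ := r₁
  obtain ⟨k₂, z₂, s₂⟩ := r₂
  obtain ⟨a, j, σ, s₀, hj, hσ, hint, hts, hxz, hss⟩ := h1
  obtain ⟨a', j', σ', s₀', hj', hσ', hint', hts', hxz', hss'⟩ := h2
  have hfu := face_unique j j' s₀ s₀' hj hj' hint hint' (hts.trans hts'.symm)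
  rw [Sigma.ext_iff] at hfu
  obtain ⟨rfl, hh⟩ := hfu
  obtain ⟨rfl, rfl⟩ := Prod.ext_iff.mp (eq_of_heq hh)
  have hez := ez_unique X σ σ' z₁ z₂ hσ hσ' hn1.1 hn2.1 (hxz.symm.trans hxz')
  rw [Sigma.ext_iff] at hez
  obtain ⟨rfl, hh2⟩ := hez
  obtain ⟨rfl, rfl⟩ := Prod.ext_iff.mp (eq_of_heq hh2)
  dsimp only at hss hss' ⊢
  rw [← hss, ← hss']

/-- The normal form of a representative. -/
noncomputable def nf (r : PtRep X) : PtRep X := (reduces_exists X r).choose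

lemma nf_spec (r : PtRep X) : IsNormal X (nf X r) ∧ Reduces X r (nf X r) :=
  (reduces_exists X r).choose_spec

lemma reduces_map {A B : ℕ} (f : mk A ⟶ mk B) (x : X.obj (op (mk B)))
    (s : (mk A).toTopObj) {r' : PtRep X}
    (h : Reduces X ⟨A, X.map f.op x, s⟩ r') (hn : IsNormal X r') :
    Reduces X ⟨B, x, toTopMap f s⟩ r' := by
  obtain ⟨a, j, σ, s₀, hj, hσ, hint, hts, hxz, hss⟩ := h
  obtain ⟨c, e, i, he, hi, hei⟩ := factorization (j ≫ f)
  obtain ⟨k₁, τ, z₁, hτ, hz₁, hwz⟩ := ez_exists X c (X.map i.op x)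
  have hcomp : X.map (e ≫ τ).op z₁ = X.map σ.op r'.2.1 := by
    rw [map_op_comp, ← hwz, ← map_op_comp X e i, hei, map_op_comp, ← hxz]
  have hez := ez_unique X (e ≫ τ) σ z₁ r'.2.1 (surj_comp he hτ) hσ hz₁ hn.1 hcomp
  rw [Sigma.ext_iff] at hez
  obtain ⟨hk, hh⟩ := hez
  subst hk
  obtain ⟨heτ, hzz⟩ := Prod.ext_iff.mp (eq_of_heq hh)
  dsimp only at heτ hzz
  refine ⟨c, i, τ, toTopMap e s₀, hi, hτ, interior_toTopMap_of_surj e he hint, ?_, ?_, ?_⟩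
  · show toTopMap i (toTopMap e s₀) = toTopMap f s
    rw [← toTopMap_comp, hei, toTopMap_comp, hts]
  · show X.map i.op x = X.map τ.op r'.2.1
    rw [hwz, hzz]
  · rw [← toTopMap_comp, heτ, hss]

lemma nf_map {A B : ℕ} (f : mk A ⟶ mk B) (x : X.obj (op (mk B))) (s : (mk A).toTopObj) :
    nf X ⟨A, X.map f.op x, s⟩ = nf X ⟨B, x, toTopMap f s⟩ :=
  reduces_unique X
    (reduces_map X f x s (nf_spec X ⟨A, X.map f.op x, s⟩).2 (nf_spec X ⟨A, X.map f.op x, s⟩).1)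
    (nf_spec X ⟨B, x, toTopMap f s⟩).2
    (nf_spec X ⟨A, X.map f.op x, s⟩).1 (nf_spec X ⟨B, x, toTopMap f s⟩).1

lemma nondeg_iso (φ : X ≅ X) {Δ : SimplexCategory} (x : X.obj (op Δ)) (hx : Nondeg X x) :
    Nondeg X (φ.hom.app (op Δ) x) := by
  intro m σ z hσ h
  apply hx m σ (φ.inv.app (op (SimplexCategory.mk m)) z) hσ
  have h1 := congrArg (φ.inv.app (op Δ)) h
  rw [FunctorToTypes.naturality φ.inv σ.op z] at h1
  have h2 : φ.inv.app (op Δ) (φ.hom.app (op Δ) x) = x := by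
    have := φ.hom_inv_id
    have h3 := congrArg (fun (q : X ⟶ X) => q.app (op Δ) x) this
    simp only [NatTrans.comp_app, types_comp_apply, NatTrans.id_app, types_id_apply] at h3
    exact h3
  rw [h2] at h1
  exact h1

lemma reduces_iso (φ : X ≅ X) {r r' : PtRep X} (h : Reduces X r r') :
    Reduces X ⟨r.1, φ.hom.app _ r.2.1, r.2.2⟩ ⟨r'.1, φ.hom.app _ r'.2.1, r'.2.2⟩ := by
  obtain ⟨a, j, σ, s₀, hj, hσ, hint, hts, hxz, hss⟩ := h
  refine ⟨a, j, σ, s₀, hj, hσ, hint, hts, ?_, hss⟩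
  show X.map j.op (φ.hom.app _ r.2.1) = X.map σ.op (φ.hom.app _ r'.2.1)
  rw [← FunctorToTypes.naturality φ.hom j.op, ← FunctorToTypes.naturality φ.hom σ.op,
    hxz]

lemma nf_iso (φ : X ≅ X) (r : PtRep X) :
    nf X ⟨r.1, φ.hom.app _ r.2.1, r.2.2⟩ =
      ⟨(nf X r).1, φ.hom.app _ (nf X r).2.1, (nf X r).2.2⟩ :=
  reduces_unique X (nf_spec X _).2 (reduces_iso X φ (nf_spec X r).2) (nf_spec X _).1
    ⟨nondeg_iso X φ _ (nf_spec X r).1.1, (nf_spec X r).1.2⟩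


end SSetPart

section Colim

open CategoryTheory.Limits

/-- The canonical map `|Δ^n| → |Y|` attached to a simplex `y`. -/
noncomputable def myLeg (Y : SSet.{u}) {Δ : SimplexCategory} (y : Y.obj (op Δ)) (t : Δ.toTopObj) :
    SSet.toTop.obj Y :=
  (SSet.toTop.map (SSet.yonedaEquiv.symm y)) ((SSet.toTopSimplex.inv.app Δ) (toNew t))

lemma myLeg_naturality {Y Z : SSet.{u}} (φ : Y ⟶ Z) {Δ : SimplexCategory}
    (y : Y.obj (op Δ)) (t : Δ.toTopObj) :
    SSet.toTop.map φ (myLeg Y y t) = myLeg Z (φ.app (op Δ) y) t := by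
  have h : SSet.yonedaEquiv.symm y ≫ φ = SSet.yonedaEquiv.symm (φ.app (op Δ) y) :=
    (SSet.yonedaEquiv.symm_apply_eq.mpr
      (by rw [SSet.yonedaEquiv_comp, Equiv.apply_symm_apply])).symm
  have h2 : SSet.toTop.map (SSet.yonedaEquiv.symm y) ≫ SSet.toTop.map φ =
      SSet.toTop.map (SSet.yonedaEquiv.symm (φ.app (op Δ) y)) := by
    rw [← Functor.map_comp, h]
  exact ConcreteCategory.congr_hom h2 ((SSet.toTopSimplex.inv.app Δ) (toNew t))

lemma myLeg_rel (Y : SSet.{u}) {A B : SimplexCategory} (f : A ⟶ B) (x : Y.obj (op B))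
    (u : A.toTopObj) :
    myLeg Y (Y.map f.op x) u = myLeg Y x (toTopMap f u) := by
  unfold myLeg
  have h1 : SSet.yonedaEquiv.symm (Y.map f.op x) =
      SSet.stdSimplex.map f ≫ SSet.yonedaEquiv.symm x :=
    (SSet.yonedaEquiv_symm_naturality_left f x).symm
  have h2 : SSet.toTop.map (SSet.yonedaEquiv.symm (Y.map f.op x)) =
      SSet.toTop.map (SSet.stdSimplex.map f) ≫ SSet.toTop.map (SSet.yonedaEquiv.symm x) := by
    rw [← Functor.map_comp, h1]
  rw [ConcreteCategory.congr_hom h2 ((SSet.toTopSimplex.inv.app A) (toNew u))]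
  have h3 : SSet.toTop.map (SSet.stdSimplex.map f) ((SSet.toTopSimplex.inv.app A) (toNew u)) =
      (SSet.toTopSimplex.inv.app B) (toNew (toTopMap f u)) := by
    have h4 := SSet.toTopSimplex.inv.naturality f
    rw [← toTop_map_toNew]
    exact (ConcreteCategory.congr_hom h4 (toNew u)).symm
  show SSet.toTop.map (SSet.yonedaEquiv.symm x)
      (SSet.toTop.map (SSet.stdSimplex.map f) ((SSet.toTopSimplex.inv.app A) (toNew u))) = _
  rw [h3]

/-- The colimit presentation of the underlying set of `|Y|`. -/
noncomputable def realIsColimit (Y : SSet.{u}) :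
    IsColimit ((forget TopCat).mapCocone
      (SSet.toTop.mapCocone (Presheaf.coconeOfRepresentable Y))) := by
  haveI : Limits.PreservesColimitsOfSize.{u, u} SSet.toTop.{u} :=
    sSetTopAdj.leftAdjoint_preservesColimits
  exact isColimitOfPreserves _ (isColimitOfPreserves _ (Presheaf.colimitOfRepresentable Y))

lemma exists_rep (Y : SSet.{u}) (p : SSet.toTop.obj Y) :
    ∃ (Δ : SimplexCategory) (y : Y.obj (op Δ)) (t : Δ.toTopObj), myLeg Y y t = p := by
  obtain ⟨j, yy, hy⟩ := Types.jointly_surjective _ (realIsColimit Y) p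
  refine ⟨j.unop.1.unop, j.unop.2, toOld (SSet.toTopSimplex.hom.app _ yy), ?_⟩
  have hinv : (SSet.toTopSimplex.inv.app j.unop.1.unop)
      (toNew (toOld ((SSet.toTopSimplex.hom.app j.unop.1.unop) yy))) = yy := by
    rw [toNew_toOld]
    have := SSet.toTopSimplex.hom_inv_id_app j.unop.1.unop
    exact ConcreteCategory.congr_hom this yy
  show (SSet.toTop.map (SSet.yonedaEquiv.symm j.unop.2)) _ = p
  rw [hinv]
  exact hy

variable (X)

/-- The cocone computing normal forms. -/
noncomputable def nbarCocone :
    Cocone (Presheaf.functorToRepresentables X ⋙ SSet.toTop ⋙ forget TopCat) where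
  pt := PtRep X
  ι :=
    { app := fun j => TypeCat.ofHom fun yy =>
        nf X ⟨j.unop.1.unop.len, j.unop.2, toOld (SSet.toTopSimplex.hom.app j.unop.1.unop yy)⟩
      naturality := by
        intro j₁ j₂ g
        ext yy
        set Δ₁ := j₁.unop.1.unop
        set Δ₂ := j₂.unop.1.unop
        set φ : Δ₁ ⟶ Δ₂ := g.unop.1.unop
        have hg : X.map φ.op j₂.unop.2 = j₁.unop.2 := g.unop.2
        have hnat : toOld (SSet.toTopSimplex.hom.app Δ₂
            (SSet.toTop.map (SSet.stdSimplex.map φ) yy)) =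
            toTopMap φ (toOld (SSet.toTopSimplex.hom.app Δ₁ yy)) := by
          have h4 := SSet.toTopSimplex.hom.naturality φ
          rw [← toOld_map]
          exact congrArg toOld (ConcreteCategory.congr_hom h4 yy)
        show nf X ⟨Δ₂.len, j₂.unop.2,
            toOld (SSet.toTopSimplex.hom.app Δ₂ (SSet.toTop.map (SSet.stdSimplex.map φ) yy))⟩ =
          nf X ⟨Δ₁.len, j₁.unop.2, toOld (SSet.toTopSimplex.hom.app Δ₁ yy)⟩
        rw [hnat, ← hg]
        exact (nf_map X (A := Δ₁.len) (B := Δ₂.len) φ j₂.unop.2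
          (toOld (SSet.toTopSimplex.hom.app Δ₁ yy))).symm }

/-- The normal-form function on points of the realization. -/
noncomputable def nbar : SSet.toTop.obj X → PtRep X :=
  fun p => (realIsColimit X).desc (nbarCocone X) p

lemma nbar_myLeg {Δ : SimplexCategory} (x : X.obj (op Δ)) (t : Δ.toTopObj) :
    nbar X (myLeg X x t) = nf X ⟨Δ.len, x, t⟩ := by
  have hfac := (realIsColimit X).fac (nbarCocone X) (op (X.elementsMk (op Δ) x))
  have h1 := ConcreteCategory.congr_hom hfac ((SSet.toTopSimplex.inv.app Δ) (toNew t))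
  have hhi : toOld ((SSet.toTopSimplex.hom.app Δ) ((SSet.toTopSimplex.inv.app Δ) (toNew t))) = t := by
    have := SSet.toTopSimplex.inv_hom_id_app Δ
    exact (congrArg toOld (ConcreteCategory.congr_hom this (toNew t))).trans (toOld_toNew t)
  have h2 : nbar X (myLeg X x t) =
      nf X ⟨Δ.len, x, toOld ((SSet.toTopSimplex.hom.app Δ) ((SSet.toTopSimplex.inv.app Δ) (toNew t)))⟩ := h1
  rw [hhi] at h2
  exact h2

lemma myLeg_reduces {r r' : PtRep X} (h : Reduces X r r') :
    myLeg X r.2.1 r.2.2 = myLeg X r'.2.1 r'.2.2 := by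
  obtain ⟨a, j, σ, s₀, hj, hσ, hint, hts, hxz, hss⟩ := h
  calc myLeg X r.2.1 r.2.2 = myLeg X r.2.1 (toTopMap j s₀) := by rw [hts]
    _ = myLeg X (X.map j.op r.2.1) s₀ := (myLeg_rel X j r.2.1 s₀).symm
    _ = myLeg X (X.map σ.op r'.2.1) s₀ := by rw [hxz]
    _ = myLeg X r'.2.1 (toTopMap σ s₀) := myLeg_rel X σ r'.2.1 s₀
    _ = myLeg X r'.2.1 r'.2.2 := by rw [hss]

end Colim

end FixedAux

/-- For a finite group `G` acting on a simplicial set `X` and `H ≤ G`, every point of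
the geometric realization `|X|` fixed by `H` is in the image of `|X^H| → |X|`: the
natural map `|X^H| → |X|^H` is surjective. -/
theorem stmt_16 (X : SSet) (G : Type*) [Group G] [Finite G] (ρ : G →* Aut X)
    (H : Subgroup G) (p : SSet.toTop.obj X)
    (hp : ∀ h ∈ H, (SSet.toTop.map (ρ h).hom) p = p) :
    ∃ q : SSet.toTop.obj (fixedSSet X ρ H),
      SSet.toTop.map (fixedInclusion X ρ H) q = p := by
  classical
  open Opposite in
  obtain ⟨Δ, x, t, hleg⟩ := FixedAux.exists_rep X p
  have key : ∀ h' ∈ H, (FixedAux.nf X ⟨Δ.len, x, t⟩ : FixedAux.PtRep X) =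
      ⟨(FixedAux.nf X ⟨Δ.len, x, t⟩).1,
        (ρ h').hom.app _ (FixedAux.nf X ⟨Δ.len, x, t⟩).2.1,
        (FixedAux.nf X ⟨Δ.len, x, t⟩).2.2⟩ := by
    intro h hh
    have h1 := FixedAux.myLeg_naturality (ρ h).hom x t
    have h2 : FixedAux.myLeg X ((ρ h).hom.app (op Δ) x) t = FixedAux.myLeg X x t := by
      rw [← h1, hleg]
      exact hp h hh
    have h3 := congrArg (FixedAux.nbar X) h2
    rw [FixedAux.nbar_myLeg X ((ρ h).hom.app (op Δ) x) t, FixedAux.nbar_myLeg X x t] at h3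
    have h4 := FixedAux.nf_iso X (ρ h) ⟨Δ.len, x, t⟩
    exact h3.symm.trans h4
  have hz : ∀ h' ∈ H, (ρ h').hom.app (op (SimplexCategory.mk (FixedAux.nf X ⟨Δ.len, x, t⟩).1))
      (FixedAux.nf X ⟨Δ.len, x, t⟩).2.1 = (FixedAux.nf X ⟨Δ.len, x, t⟩).2.1 := by
    intro h hh
    have h5 := key h hh
    rw [Sigma.ext_iff] at h5
    obtain ⟨-, hh5⟩ := h5
    exact (congrArg Prod.fst (eq_of_heq hh5)).symm
  refine ⟨FixedAux.myLeg (fixedSSet X ρ H)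
      (Δ := SimplexCategory.mk (FixedAux.nf X ⟨Δ.len, x, t⟩).1)
      ⟨(FixedAux.nf X ⟨Δ.len, x, t⟩).2.1, hz⟩ (FixedAux.nf X ⟨Δ.len, x, t⟩).2.2, ?_⟩
  refine (FixedAux.myLeg_naturality (fixedInclusion X ρ H) _ _).trans ?_
  have h7 := FixedAux.myLeg_reduces X (FixedAux.nf_spec X ⟨Δ.len, x, t⟩).2
  exact h7.symm.trans hleg
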